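/- arXiv:1701.00479 — 3 statements merged into one kernel-verified Lean document; each statement's English description precedes it below -/
import Mathlib

section
/- Let L be the CGF of NIG(α, β, 0, 1) and s̆(z) its saddle point for value z. Then the 'skewness' ratio η(z) := L'''(s̆)²/L''(s̆)³ equals 9z³/((s̆ + β)(z² + 1)) = (9z²)/(α√(1 + z²)), and the 'kurtosis' ratio ρ(z) := L⁽⁴⁾(s̆)/L''(s̆)² equals 3(5z² + 1)/(α√(1 + z²)). Consequently 3ρ(z)/η(z) − 5 = 1/z² for z ≠ 0. -/
lemma stmt6_d1 (α β x : ℝ) (hx : (β + x) ^ 2 < α ^ 2) :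
    HasDerivAt (fun s => Real.sqrt (α ^ 2 - β ^ 2) - Real.sqrt (α ^ 2 - (β + s) ^ 2))
      ((β + x) / Real.sqrt (α ^ 2 - (β + x) ^ 2)) x := by
  have hpos : 0 < α ^ 2 - (β + x) ^ 2 := by linarith
  have hg : HasDerivAt (fun s => α ^ 2 - (β + s) ^ 2) (-(2 * (β + x))) x := by
    have h1 : HasDerivAt (fun s : ℝ => β + s) 1 x := (hasDerivAt_id x).const_add β
    have := (h1.pow 2).const_sub (α ^ 2)
    refine this.congr_deriv ?_; ring
  have := (hg.sqrt hpos.ne').const_sub (Real.sqrt (α ^ 2 - β ^ 2))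
  refine this.congr_deriv ?_
  field_simp

lemma stmt6_aux (α β x : ℝ) (hx : (β + x) ^ 2 < α ^ 2) :
    HasDerivAt (fun s => (β + s) / Real.sqrt (α ^ 2 - (β + s) ^ 2))
      (α ^ 2 / Real.sqrt (α ^ 2 - (β + x) ^ 2) ^ 3) x ∧
    HasDerivAt (fun s => α ^ 2 / Real.sqrt (α ^ 2 - (β + s) ^ 2) ^ 3)
      (3 * α ^ 2 * (β + x) / Real.sqrt (α ^ 2 - (β + x) ^ 2) ^ 5) x ∧
    HasDerivAt (fun s => 3 * α ^ 2 * (β + s) / Real.sqrt (α ^ 2 - (β + s) ^ 2) ^ 5)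
      (3 * α ^ 2 * (α ^ 2 + 4 * (β + x) ^ 2) / Real.sqrt (α ^ 2 - (β + x) ^ 2) ^ 7) x := by
  have hpos : 0 < α ^ 2 - (β + x) ^ 2 := by linarith
  have hq : 0 < Real.sqrt (α ^ 2 - (β + x) ^ 2) := Real.sqrt_pos.mpr hpos
  have hq2 : Real.sqrt (α ^ 2 - (β + x) ^ 2) ^ 2 = α ^ 2 - (β + x) ^ 2 :=
    Real.sq_sqrt hpos.le
  set q := Real.sqrt (α ^ 2 - (β + x) ^ 2) with hqdef
  have hα2 : α ^ 2 = q ^ 2 + (β + x) ^ 2 := by linarith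
  have h1 : HasDerivAt (fun s : ℝ => β + s) 1 x := (hasDerivAt_id x).const_add β
  have hg : HasDerivAt (fun s => α ^ 2 - (β + s) ^ 2) (-(2 * (β + x))) x := by
    have := (h1.pow 2).const_sub (α ^ 2)
    refine this.congr_deriv ?_; ring
  have hsq : HasDerivAt (fun s => Real.sqrt (α ^ 2 - (β + s) ^ 2))
      (-(2 * (β + x)) / (2 * q)) x := hg.sqrt hpos.ne'
  refine ⟨?_, ?_, ?_⟩
  · have := h1.div hsq hq.ne'
    refine this.congr_deriv ?_
    rw [← hqdef, hα2]
    field_simp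
    ring
  · have := (hasDerivAt_const x (α ^ 2)).div (hsq.pow 3) (pow_ne_zero _ hq.ne')
    refine this.congr_deriv ?_
    simp only [Pi.pow_apply]
    rw [← hqdef]
    push_cast
    field_simp
    ring
  · have hnum : HasDerivAt (fun s : ℝ => 3 * α ^ 2 * (β + s)) (3 * α ^ 2) x := by
      have := h1.const_mul (3 * α ^ 2)
      refine this.congr_deriv ?_; ring
    have := hnum.div (hsq.pow 5) (pow_ne_zero _ hq.ne')
    refine this.congr_deriv ?_
    simp only [Pi.pow_apply]
    rw [← hqdef, hα2]
    push_cast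
    field_simp
    ring

lemma stmt6_derivs (α β : ℝ) (x : ℝ) (hx : (β + x) ^ 2 < α ^ 2) :
    iteratedDeriv 2 (fun s => Real.sqrt (α ^ 2 - β ^ 2) - Real.sqrt (α ^ 2 - (β + s) ^ 2)) x
      = α ^ 2 / Real.sqrt (α ^ 2 - (β + x) ^ 2) ^ 3 ∧
    iteratedDeriv 3 (fun s => Real.sqrt (α ^ 2 - β ^ 2) - Real.sqrt (α ^ 2 - (β + s) ^ 2)) x
      = 3 * α ^ 2 * (β + x) / Real.sqrt (α ^ 2 - (β + x) ^ 2) ^ 5 ∧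
    iteratedDeriv 4 (fun s => Real.sqrt (α ^ 2 - β ^ 2) - Real.sqrt (α ^ 2 - (β + s) ^ 2)) x
      = 3 * α ^ 2 * (α ^ 2 + 4 * (β + x) ^ 2) / Real.sqrt (α ^ 2 - (β + x) ^ 2) ^ 7 := by
  set L : ℝ → ℝ := fun s => Real.sqrt (α ^ 2 - β ^ 2) - Real.sqrt (α ^ 2 - (β + s) ^ 2) with hL
  set U : Set ℝ := {s | (β + s) ^ 2 < α ^ 2} with hUdef
  have hUopen : IsOpen U := by
    have : U = (fun s => (β + s) ^ 2) ⁻¹' (Set.Iio (α ^ 2)) := rfl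
    rw [this]
    exact (continuous_const.add continuous_id).pow 2 |>.isOpen_preimage _ isOpen_Iio
  have hxU : U ∈ nhds x := hUopen.mem_nhds hx
  set f1 : ℝ → ℝ := fun s => (β + s) / Real.sqrt (α ^ 2 - (β + s) ^ 2) with hf1
  set f2 : ℝ → ℝ := fun s => α ^ 2 / Real.sqrt (α ^ 2 - (β + s) ^ 2) ^ 3 with hf2
  set f3 : ℝ → ℝ := fun s => 3 * α ^ 2 * (β + s) / Real.sqrt (α ^ 2 - (β + s) ^ 2) ^ 5 with hf3
  have e1 : deriv L =ᶠ[nhds x] f1 :=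
    Filter.eventuallyEq_of_mem hxU fun s hs => (stmt6_d1 α β s hs).deriv
  have e2 : deriv f1 =ᶠ[nhds x] f2 :=
    Filter.eventuallyEq_of_mem hxU fun s hs => (stmt6_aux α β s hs).1.deriv
  have e3 : deriv f2 =ᶠ[nhds x] f3 :=
    Filter.eventuallyEq_of_mem hxU fun s hs => (stmt6_aux α β s hs).2.1.deriv
  have hd2 : iteratedDeriv 2 L x = f2 x := by
    rw [show (2:ℕ) = 1+1 from rfl, iteratedDeriv_succ, iteratedDeriv_one]
    rw [e1.deriv_eq]
    exact (stmt6_aux α β x hx).1.deriv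
  have hDL2 : deriv (deriv L) =ᶠ[nhds x] f2 := e1.deriv.trans e2
  have hd3 : iteratedDeriv 3 L x = f3 x := by
    rw [show (3:ℕ) = 1+1+1 from rfl, iteratedDeriv_succ, iteratedDeriv_succ, iteratedDeriv_one]
    rw [hDL2.deriv_eq]
    exact (stmt6_aux α β x hx).2.1.deriv
  have hDL3 : deriv (deriv (deriv L)) =ᶠ[nhds x] f3 := hDL2.deriv.trans e3
  have hd4 : iteratedDeriv 4 L x
      = 3 * α ^ 2 * (α ^ 2 + 4 * (β + x) ^ 2) / Real.sqrt (α ^ 2 - (β + x) ^ 2) ^ 7 := by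
    rw [show (4:ℕ) = 1+1+1+1 from rfl, iteratedDeriv_succ, iteratedDeriv_succ,
      iteratedDeriv_succ, iteratedDeriv_one]
    rw [hDL3.deriv_eq]
    exact (stmt6_aux α β x hx).2.2.deriv
  exact ⟨hd2, hd3, hd4⟩

/-- For `L` the CGF of `NIG(α, β, 0, 1)` and saddle point `s̆(z) = −β + αz/√(1+z²)`,
the skewness ratio `η = L'''(s̆)²/L''(s̆)³` equals `9z³/((s̆+β)(z²+1)) = 9z²/(α√(1+z²))`,
the kurtosis ratio `ρ = L⁽⁴⁾(s̆)/L''(s̆)²` equals `3(5z²+1)/(α√(1+z²))`, and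
`3ρ/η − 5 = 1/z²`. -/
theorem stmt_6 (α β : ℝ) (hα : 0 < α) (hβ : |β| < α) (z : ℝ) (hz : z ≠ 0) :
    let L : ℝ → ℝ := fun s => Real.sqrt (α ^ 2 - β ^ 2) - Real.sqrt (α ^ 2 - (β + s) ^ 2)
    let s := -β + α * z / Real.sqrt (1 + z ^ 2)
    let η := (iteratedDeriv 3 L s) ^ 2 / (iteratedDeriv 2 L s) ^ 3
    let ρ := iteratedDeriv 4 L s / (iteratedDeriv 2 L s) ^ 2
    η = 9 * z ^ 3 / ((s + β) * (z ^ 2 + 1)) ∧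
      η = 9 * z ^ 2 / (α * Real.sqrt (1 + z ^ 2)) ∧
      ρ = 3 * (5 * z ^ 2 + 1) / (α * Real.sqrt (1 + z ^ 2)) ∧
      3 * ρ / η - 5 = 1 / z ^ 2 := by
  intro L s η ρ
  have hw0 : 0 < Real.sqrt (1 + z ^ 2) := Real.sqrt_pos.mpr (by positivity)
  have hw2 : Real.sqrt (1 + z ^ 2) ^ 2 = 1 + z ^ 2 := Real.sq_sqrt (by positivity)
  set w := Real.sqrt (1 + z ^ 2) with hwdef
  have hz2 : 0 < z ^ 2 := by positivity
  have hsb : β + s = α * z / w := by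
    show β + (-β + α * z / w) = α * z / w; ring
  have hsb' : s + β = α * z / w := by rw [add_comm]; exact hsb
  have hx : (β + s) ^ 2 < α ^ 2 := by
    rw [hsb]
    have h1 : (α * z / w) ^ 2 = α ^ 2 * z ^ 2 / w ^ 2 := by ring
    rw [h1, hw2, div_lt_iff₀ (by positivity)]
    nlinarith [sq_nonneg (α * z), mul_pos hα hα]
  have hq : Real.sqrt (α ^ 2 - (β + s) ^ 2) = α / w := by
    have h2 : α ^ 2 - (β + s) ^ 2 = (α / w) ^ 2 := by
      rw [hsb]
      field_simp
      linear_combination hw2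
    rw [h2, Real.sqrt_sq (by positivity)]
  obtain ⟨hd2, hd3, hd4⟩ := stmt6_derivs α β s hx
  rw [hq] at hd2 hd3 hd4
  rw [hsb] at hd3 hd4
  have hL : L = fun s => Real.sqrt (α ^ 2 - β ^ 2) - Real.sqrt (α ^ 2 - (β + s) ^ 2) := rfl
  have hη : η = 9 * z ^ 2 / (α * w) := by
    show (iteratedDeriv 3 L s) ^ 2 / (iteratedDeriv 2 L s) ^ 3 = _
    rw [hL, hd2, hd3]
    field_simp
    ring
  have hρ : ρ = 3 * (5 * z ^ 2 + 1) / (α * w) := by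
    show iteratedDeriv 4 L s / (iteratedDeriv 2 L s) ^ 2 = _
    rw [hL, hd2, hd4]
    rw [div_eq_div_iff (by positivity) (by positivity)]
    field_simp
    linear_combination hw2
  refine ⟨?_, ?_, ?_, ?_⟩
  · rw [hη, hsb']
    rw [div_eq_div_iff (by positivity) (by positivity)]
    field_simp
    linear_combination (-1) * hw2
  · exact hη
  · exact hρ
  · rw [hη, hρ]
    field_simp
    ring
end

section
/- Let α > 0, |β| < α, δ = 1, μ = 0, and c ∈ ℝ with c² − 2γc ≥ 0 where γ = √(α² − β²). Then the solutions z of the equation L(s̆(z)) − z·s̆(z) = c (with s̆(z) = −β + αz/√(1 + z²) the NIG saddle point) are given by z = ((γ − c)β ± α√(c² − 2γc))/γ². -/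
/-- For `NIG(α, β, 0, 1)` with CGF `L(s) = γ − √(α² − (β+s)²)`, `γ = √(α²−β²)`,
and saddle point `s̆(z) = −β + αz/√(1+z²)`, if `c² − 2γc ≥ 0`, then every solution `z`
of `L(s̆(z)) − z·s̆(z) = c` is of the form `z = ((γ−c)β ± α√(c²−2γc))/γ²`. -/
theorem stmt_9 (α β c z : ℝ) (hα : 0 < α) (hβ : |β| < α) :
    let γ := Real.sqrt (α ^ 2 - β ^ 2)
    let L : ℝ → ℝ := fun s => γ - Real.sqrt (α ^ 2 - (β + s) ^ 2)
    let s := -β + α * z / Real.sqrt (1 + z ^ 2)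
    0 ≤ c ^ 2 - 2 * γ * c →
    L s - z * s = c →
    z = ((γ - c) * β + α * Real.sqrt (c ^ 2 - 2 * γ * c)) / γ ^ 2 ∨
      z = ((γ - c) * β - α * Real.sqrt (c ^ 2 - 2 * γ * c)) / γ ^ 2 := by
  intro γ L s hc heq
  have habs := abs_lt.mp hβ
  have hβ2 : β ^ 2 < α ^ 2 := by nlinarith [habs.1, habs.2]
  have hγ2 : γ ^ 2 = α ^ 2 - β ^ 2 := Real.sq_sqrt (by linarith)
  have hγpos : 0 < γ := Real.sqrt_pos.mpr (by linarith)
  set w := Real.sqrt (1 + z ^ 2) with hw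
  have hw0 : 0 < w := Real.sqrt_pos.mpr (by positivity)
  have hw2 : w ^ 2 = 1 + z ^ 2 := Real.sq_sqrt (by positivity)
  have hs : β + s = α * z / w := by simp only [s]; ring
  have h1 : Real.sqrt (α ^ 2 - (β + s) ^ 2) = α / w := by
    rw [hs]
    have h : α ^ 2 - (α * z / w) ^ 2 = (α / w) ^ 2 := by
      field_simp
      nlinarith [hw2]
    rw [h, Real.sqrt_sq (by positivity)]
  have heq2 : α * w = (γ - c) + β * z := by
    have h2 : γ - α / w - z * s = c := by
      have h := heq
      simp only [L] at h
      rw [h1] at h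
      linarith
    have hs' : s = -β + α * z / w := rfl
    rw [hs'] at h2
    field_simp at h2
    nlinarith [hw2, hw0]
  have key : (γ ^ 2 * z - (γ - c) * β) ^ 2 = α ^ 2 * (c ^ 2 - 2 * γ * c) := by
    have h3 : α ^ 2 * (1 + z ^ 2) = ((γ - c) + β * z) ^ 2 := by
      rw [← hw2, ← heq2]; ring
    linear_combination (γ ^ 2 * z ^ 2 + (γ - c) ^ 2) * hγ2 + γ ^ 2 * h3
  have hsqrt : |γ ^ 2 * z - (γ - c) * β| = α * Real.sqrt (c ^ 2 - 2 * γ * c) := by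
    rw [← Real.sqrt_sq_eq_abs, key, Real.sqrt_mul (by positivity), Real.sqrt_sq hα.le]
  have hγ2ne : γ ^ 2 ≠ 0 := by positivity
  rcases (abs_eq (by positivity : (0:ℝ) ≤ α * Real.sqrt (c ^ 2 - 2 * γ * c))).mp hsqrt with h | h
  · left; rw [eq_div_iff hγ2ne]; linarith
  · right; rw [eq_div_iff hγ2ne]; linarith
end

section
/- Let K(t) = λ₂((1 + θt/β)^{−α} − 1) + λ₁((1 − t/β)^{−α} − 1) with λ₁, λ₂, θ, α, β > 0. Then the saddle point equation K'(t̂) = 0 has the solution t̂ = β(1 − ζ)/(1 + θζ), where ζ = (θλ₂/λ₁)^{−1/(α+1)}. -/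
/-- For `K(t) = λ₂((1 + θt/β)^{−α} − 1) + λ₁((1 − t/β)^{−α} − 1)` with all parameters
positive, the saddle point equation `K'(t̂) = 0` has the solution
`t̂ = β(1 − ζ)/(1 + θζ)` where `ζ = (θλ₂/λ₁)^{−1/(α+1)}`. -/
theorem stmt_12 (lam1 lam2 θ α β : ℝ) (h1 : 0 < lam1) (h2 : 0 < lam2) (hθ : 0 < θ)
    (hα : 0 < α) (hβ : 0 < β) :
    let K : ℝ → ℝ := fun t =>
      lam2 * ((1 + θ * t / β) ^ (-α) - 1) + lam1 * ((1 - t / β) ^ (-α) - 1)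
    let ζ := (θ * lam2 / lam1) ^ (-(1 / (α + 1)))
    deriv K (β * (1 - ζ) / (1 + θ * ζ)) = 0 := by
  intro K ζ
  have hc : 0 < θ * lam2 / lam1 := by positivity
  have hζ : 0 < ζ := Real.rpow_pos_of_pos hc _
  have hd : 0 < 1 + θ * ζ := by positivity
  set t0 := β * (1 - ζ) / (1 + θ * ζ) with ht0
  have hA : 1 + θ * t0 / β = (1 + θ) / (1 + θ * ζ) := by
    rw [ht0]; field_simp; ring
  have hB : 1 - t0 / β = ζ * (1 + θ) / (1 + θ * ζ) := by
    rw [ht0]; field_simp; ring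
  have hApos : 0 < 1 + θ * t0 / β := by rw [hA]; positivity
  have hBpos : 0 < 1 - t0 / β := by rw [hB]; positivity
  have hg1 : HasDerivAt (fun t : ℝ => 1 + θ * t / β) (θ / β) t0 := by
    simpa using (((hasDerivAt_id t0).const_mul θ).div_const β).const_add 1
  have hg2 : HasDerivAt (fun t : ℝ => 1 - t / β) (-(1 / β)) t0 := by
    simpa [div_eq_mul_inv] using ((hasDerivAt_id t0).div_const β).const_sub 1
  have h1d : HasDerivAt (fun t : ℝ => (1 + θ * t / β) ^ (-α))
      (-α * (1 + θ * t0 / β) ^ (-α - 1) * (θ / β)) t0 :=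
    by have := (Real.hasDerivAt_rpow_const (p := -α) (Or.inl hApos.ne')).comp t0 hg1; exact this
  have h2d : HasDerivAt (fun t : ℝ => (1 - t / β) ^ (-α))
      (-α * (1 - t0 / β) ^ (-α - 1) * (-(1 / β))) t0 :=
    by have := (Real.hasDerivAt_rpow_const (p := -α) (Or.inl hBpos.ne')).comp t0 hg2; exact this
  have hK : HasDerivAt K
      (lam2 * (-α * (1 + θ * t0 / β) ^ (-α - 1) * (θ / β)) +
       lam1 * (-α * (1 - t0 / β) ^ (-α - 1) * (-(1 / β)))) t0 :=
    ((h1d.sub_const 1).const_mul lam2).add ((h2d.sub_const 1).const_mul lam1)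
  rw [hK.deriv]
  -- now the algebra
  have hζpow : ζ ^ (-α - 1) = θ * lam2 / lam1 := by
    rw [show ζ = (θ * lam2 / lam1) ^ (-(1 / (α + 1))) from rfl,
      ← Real.rpow_mul hc.le]
    have : -(1 / (α + 1)) * (-α - 1) = 1 := by
      field_simp
      ring
    rw [this, Real.rpow_one]
  have hBrw : (1 - t0 / β) ^ (-α - 1) = ζ ^ (-α - 1) * (1 + θ * t0 / β) ^ (-α - 1) := by
    rw [hB, hA, show ζ * (1 + θ) / (1 + θ * ζ) = ζ * ((1 + θ) / (1 + θ * ζ)) by ring,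
      Real.mul_rpow hζ.le (by positivity)]
  rw [hBrw, hζpow]
  have hl1 : lam1 ≠ 0 := h1.ne'
  field_simp
  ring
end
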